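/- Let V be a rational vector space, n ≥ 1, and e_0, …, e_n elements of V. Suppose R(ℓ) := ∑_{k=ℓ}^n C(k,ℓ) e_k = 0 for all 0 ≤ ℓ ≤ n-1, and V_0 := ∑_{k=0}^n (-1)^{n-k} k! (n-k)! e_k = 0. Then e_n = 0. -/

import Mathlib

open Finset

lemma alt_q (m : ℕ) : ∑ i ∈ range (m+1), (-1:ℚ)^i * (m.choose i) = if m = 0 then 1 else 0 := by
  have h := Int.alternating_sum_range_choose (n := m)
  have := congrArg (fun z : ℤ => (z : ℚ)) h
  push_cast at this
  simpa using this

lemma stmt3_inner_sum (k j : ℕ) (hj : j ≤ k) :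
    ∑ ℓ ∈ range (k+1), (k.choose ℓ : ℚ) * ((-1:ℚ)^(ℓ-j) * (ℓ.choose j)) =
      if j = k then 1 else 0 := by
  rw [Finset.range_eq_Ico, ← Finset.sum_subset (Finset.Ico_subset_Ico (Nat.zero_le j) le_rfl :
        Finset.Ico j (k+1) ⊆ Finset.Ico 0 (k+1))]
  · rw [Finset.sum_Ico_eq_sum_range]
    have hrange : k + 1 - j = (k - j) + 1 := by omega
    rw [hrange]
    have hterm : ∀ m ∈ range ((k-j)+1),
        (k.choose (j+m) : ℚ) * ((-1:ℚ)^(j+m-j) * ((j+m).choose j)) =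
        (k.choose j : ℚ) * ((-1:ℚ)^m * ((k-j).choose m)) := by
      intro m hm
      rw [mem_range] at hm
      have hjm : j + m ≤ k := by omega
      have hch : k.choose (j+m) * (j+m).choose j = k.choose j * (k-j).choose m := by
        have := Nat.choose_mul (n := k) (Nat.le_add_right j m)
        simpa using this
      have : (k.choose (j+m) : ℚ) * ((j+m).choose j) = (k.choose j : ℚ) * ((k-j).choose m) := by
        exact_mod_cast congrArg (fun z : ℕ => (z : ℚ)) hch
      rw [Nat.add_sub_cancel_left]
      linear_combination ((-1:ℚ)^m) * this
    rw [Finset.sum_congr rfl hterm, ← Finset.mul_sum]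
    have := alt_q (k - j)
    rw [this]
    by_cases h : j = k
    · simp [h]
    · have : k - j ≠ 0 := by omega
      simp [h, this]
  · intro ℓ hℓ hℓ'
    have : ℓ < j := by
      simp only [Finset.mem_Ico] at hℓ hℓ'
      omega
    rw [Nat.choose_eq_zero_of_lt this]
    simp

lemma binom_inv (f : ℕ → ℚ) (n k : ℕ) (hk : k ≤ n) :
    ∑ ℓ ∈ range (n+1), (k.choose ℓ : ℚ) *
      (∑ j ∈ range (ℓ+1), (-1:ℚ)^(ℓ-j) * (ℓ.choose j) * f j) = f k := by
  rw [← Finset.sum_subset (Finset.range_subset_range.2 (Nat.succ_le_succ hk))]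
  · have hext : ∀ ℓ ∈ range (k+1),
        (k.choose ℓ : ℚ) * (∑ j ∈ range (ℓ+1), (-1:ℚ)^(ℓ-j) * (ℓ.choose j) * f j) =
        ∑ j ∈ range (k+1), (k.choose ℓ : ℚ) * ((-1:ℚ)^(ℓ-j) * (ℓ.choose j)) * f j := by
      intro ℓ hℓ
      rw [mem_range] at hℓ
      rw [Finset.mul_sum]
      rw [← Finset.sum_subset (Finset.range_subset_range.2 (by omega : ℓ + 1 ≤ k + 1))]
      · exact Finset.sum_congr rfl (fun j _ => by ring)
      · intro j hj hj'
        have : ℓ < j := by simp only [mem_range] at hj hj'; omega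
        rw [Nat.choose_eq_zero_of_lt this]
        simp
    rw [Finset.sum_congr rfl hext, Finset.sum_comm]
    have : ∀ j ∈ range (k+1),
        ∑ ℓ ∈ range (k+1), (k.choose ℓ : ℚ) * ((-1:ℚ)^(ℓ-j) * (ℓ.choose j)) * f j =
        (if j = k then 1 else 0) * f j := by
      intro j hj
      rw [mem_range] at hj
      rw [← Finset.sum_mul, stmt3_inner_sum k j (by omega)]
    rw [Finset.sum_congr rfl this]
    simp
  · intro ℓ hℓ hℓ'
    have : k < ℓ := by simp only [mem_range] at hℓ hℓ'; omega
    rw [Nat.choose_eq_zero_of_lt this]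
    simp

def stmt3f (n j : ℕ) : ℚ := (-1:ℚ)^(n-j) * (Nat.factorial j) * (Nat.factorial (n-j))

def stmt3c (n ℓ : ℕ) : ℚ := ∑ j ∈ range (ℓ+1), (-1:ℚ)^(ℓ-j) * (ℓ.choose j) * stmt3f n j

lemma stmt3c_n (n : ℕ) : stmt3c n n = (n+1) * n.factorial := by
  unfold stmt3c
  have h : ∀ j ∈ range (n+1), (-1:ℚ)^(n-j) * (n.choose j) * stmt3f n j = n.factorial := by
    intro j hj
    rw [mem_range] at hj
    have hfac : (n.choose j) * j.factorial * (n-j).factorial = n.factorial :=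
      Nat.choose_mul_factorial_mul_factorial (by omega)
    have hfacq : ((n.choose j : ℚ)) * j.factorial * (n-j).factorial = n.factorial := by
      exact_mod_cast hfac
    have hsq : (-1:ℚ)^(n-j) * (-1:ℚ)^(n-j) = 1 := by
      rw [← pow_add]; exact Even.neg_one_pow ⟨n-j, rfl⟩
    unfold stmt3f
    calc (-1:ℚ)^(n-j) * (n.choose j) * ((-1:ℚ)^(n-j) * j.factorial * (n-j).factorial)
        = ((-1:ℚ)^(n-j) * (-1)^(n-j)) * ((n.choose j:ℚ) * j.factorial * (n-j).factorial) := by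
          ring
      _ = n.factorial := by rw [hsq, hfacq, one_mul]
  rw [Finset.sum_congr rfl h, Finset.sum_const, Finset.card_range, nsmul_eq_mul]
  push_cast
  ring

/-- If `R(ℓ) = ∑_{k=ℓ}^n C(k,ℓ) e_k = 0` for all `0 ≤ ℓ ≤ n-1` and
`∑_{k=0}^n (-1)^{n-k} k!(n-k)! e_k = 0`, then `e_n = 0`. -/
theorem stmt3 (V : Type*) [AddCommGroup V] [Module ℚ V] (n : ℕ) (hn : 1 ≤ n)
    (e : ℕ → V)
    (hR : ∀ ℓ < n, ∑ k ∈ Finset.range (n+1), (Nat.choose k ℓ : ℚ) • e k = 0)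
    (hV : ∑ k ∈ Finset.range (n+1),
        ((-1 : ℚ) ^ (n - k) * (Nat.factorial k) * (Nat.factorial (n - k))) • e k = 0) :
    e n = 0 := by
  have key : ∑ ℓ ∈ range (n+1), stmt3c n ℓ • (∑ k ∈ range (n+1), (Nat.choose k ℓ : ℚ) • e k)
      = ∑ k ∈ range (n+1), stmt3f n k • e k := by
    calc ∑ ℓ ∈ range (n+1), stmt3c n ℓ • ∑ k ∈ range (n+1), (Nat.choose k ℓ:ℚ) • e k
        = ∑ ℓ ∈ range (n+1), ∑ k ∈ range (n+1), (stmt3c n ℓ * (Nat.choose k ℓ:ℚ)) • e k := by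
          refine Finset.sum_congr rfl fun ℓ _ => ?_
          rw [Finset.smul_sum]
          exact Finset.sum_congr rfl fun k _ => (smul_smul _ _ _)
      _ = ∑ k ∈ range (n+1), (∑ ℓ ∈ range (n+1), (Nat.choose k ℓ:ℚ) * stmt3c n ℓ) • e k := by
          rw [Finset.sum_comm]
          refine Finset.sum_congr rfl fun k _ => ?_
          rw [Finset.sum_smul]
          exact Finset.sum_congr rfl fun ℓ _ => by rw [mul_comm]
      _ = ∑ k ∈ range (n+1), stmt3f n k • e k := by
          refine Finset.sum_congr rfl fun k hk => ?_
          rw [mem_range] at hk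
          rw [show (∑ ℓ ∈ range (n+1), (Nat.choose k ℓ:ℚ) * stmt3c n ℓ) = stmt3f n k from
            binom_inv (stmt3f n) n k (by omega)]
  have lhs : ∑ ℓ ∈ range (n+1), stmt3c n ℓ • (∑ k ∈ range (n+1), (Nat.choose k ℓ : ℚ) • e k)
      = stmt3c n n • e n := by
    rw [Finset.sum_range_succ]
    have h1 : ∑ ℓ ∈ range n, stmt3c n ℓ • (∑ k ∈ range (n+1), (Nat.choose k ℓ : ℚ) • e k) = 0 :=
      Finset.sum_eq_zero fun ℓ hℓ => by rw [hR ℓ (mem_range.1 hℓ), smul_zero]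
    have h2 : ∑ k ∈ range (n+1), (Nat.choose k n : ℚ) • e k = e n := by
      rw [Finset.sum_range_succ, Nat.choose_self]
      have h3 : ∑ k ∈ range n, (Nat.choose k n : ℚ) • e k = 0 :=
        Finset.sum_eq_zero fun k hk => by
          rw [Nat.choose_eq_zero_of_lt (mem_range.1 hk)]; simp
      rw [h3]; simp
    rw [h1, h2, zero_add]
  have h0 : stmt3c n n • e n = 0 := by
    rw [← lhs, key]
    exact hV
  have hne : stmt3c n n ≠ 0 := by
    rw [stmt3c_n]
    positivity
  rcases smul_eq_zero.mp h0 with h | h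
  · exact absurd h hne
  · exact h
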